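/- Let E = ℝ^ℓ × ℝ^m be the product of Euclidean spaces (with the product inner-product structure). Let H be a convex body in ℝ^ℓ, K a convex body in ℝ^m, and z' ∈ ℝ^m a unit vector; set z = (0, z') ∈ E. Then for every x ∈ ℝ^ℓ and y ∈ ℝ^m: w((H ×ˢ K) ∩ ((H ×ˢ K) + (x,y)), z) equals w(K ∩ (K + y), z') if x ∈ H − H, and equals 0 otherwise. (Theorem 6.2(I): the width-covariogram of a Cartesian product is completely determined by the difference body of H and by K.) -/

import Mathlib

open Set
open scoped Pointwise Classical

/-- Width of a set `A` in direction `z`: the difference of the supremum and infimum of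
the inner products with `z` (with the real-`sSup` junk-value convention `w ∅ z = 0`). -/
noncomputable def w {E : Type*} [NormedAddCommGroup E] [InnerProductSpace ℝ E]
    (A : Set E) (z : E) : ℝ :=
  sSup ((fun a => (inner ℝ a z : ℝ)) '' A) - sInf ((fun a => (inner ℝ a z : ℝ)) '' A)

/-- The Cartesian product of a set `H ⊆ ℝ^ℓ` and `K ⊆ ℝ^m`, viewed as a subset of the
product Euclidean space `WithLp 2 (ℝ^ℓ × ℝ^m)` (the product inner-product structure). -/
noncomputable def prodW {l m : ℕ} (H : Set (EuclideanSpace ℝ (Fin l)))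
    (K : Set (EuclideanSpace ℝ (Fin m))) :
    Set (WithLp 2 (EuclideanSpace ℝ (Fin l) × EuclideanSpace ℝ (Fin m))) :=
  (WithLp.equiv 2 (EuclideanSpace ℝ (Fin l) × EuclideanSpace ℝ (Fin m))).symm '' (H ×ˢ K)

/-- Theorem 6.2(I): the width-covariogram of `H × K` in direction `z = (0, z')` equals
`w(K ∩ (K + y), z')` when `x ∈ H − H` and `0` otherwise. -/
theorem width_covariogram_of_prod
    (l m : ℕ)
    (H : Set (EuclideanSpace ℝ (Fin l)))
    (hHne : H.Nonempty) (hHcp : IsCompact H) (hHcv : Convex ℝ H)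
    (hHint : (interior H).Nonempty)
    (K : Set (EuclideanSpace ℝ (Fin m)))
    (hKne : K.Nonempty) (hKcp : IsCompact K) (hKcv : Convex ℝ K)
    (hKint : (interior K).Nonempty)
    (z' : EuclideanSpace ℝ (Fin m)) (hz' : ‖z'‖ = 1)
    (x : EuclideanSpace ℝ (Fin l)) (y : EuclideanSpace ℝ (Fin m)) :
    w (prodW H K ∩
        ((· + (WithLp.equiv 2 (EuclideanSpace ℝ (Fin l) × EuclideanSpace ℝ (Fin m))).symm (x, y))
          '' prodW H K))
      ((WithLp.equiv 2 (EuclideanSpace ℝ (Fin l) × EuclideanSpace ℝ (Fin m))).symm (0, z'))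
      = if x ∈ H - H then w (K ∩ ((· + y) '' K)) z' else 0 := by
  classical
  set e := WithLp.equiv 2 (EuclideanSpace ℝ (Fin l) × EuclideanSpace ℝ (Fin m)) with he
  set S := H ∩ ((· + x) '' H) with hS
  set T := K ∩ ((· + y) '' K) with hT
  -- Step 1: the intersection is the product of the coordinatewise intersections
  have hinter : prodW H K ∩ ((· + e.symm (x, y)) '' prodW H K) = e.symm '' (S ×ˢ T) := by
    unfold prodW
    have h1 : (· + e.symm (x, y)) '' (e.symm '' (H ×ˢ K))
        = e.symm '' ((· + (x, y)) '' (H ×ˢ K)) := by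
      rw [← image_comp, ← image_comp]; rfl
    have h2 : ((· + (x, y)) '' (H ×ˢ K)) = ((· + x) '' H) ×ˢ ((· + y) '' K) := by
      ext p
      constructor
      · rintro ⟨a, ⟨ha1, ha2⟩, rfl⟩
        exact ⟨⟨a.1, ha1, rfl⟩, ⟨a.2, ha2, rfl⟩⟩
      · rintro ⟨⟨a, ha, hae⟩, b, hb, hbe⟩
        exact ⟨(a, b), ⟨ha, hb⟩, by rw [Prod.ext_iff]; exact ⟨hae, hbe⟩⟩
    rw [h1, h2, ← Set.image_inter (Equiv.injective _), Set.prod_inter_prod]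
  -- Step 2: inner product with (0, z') only sees the second coordinate
  have hip : ∀ p : EuclideanSpace ℝ (Fin l) × EuclideanSpace ℝ (Fin m),
      (inner ℝ (e.symm p) (e.symm (0, z')) : ℝ) = inner ℝ p.2 z' := by
    intro p
    show inner ℝ p.1 (0 : EuclideanSpace ℝ (Fin l)) + inner ℝ p.2 z' = inner ℝ p.2 z'
    rw [inner_zero_right, zero_add]
  rw [hinter]
  by_cases hx : x ∈ H - H
  · rw [if_pos hx]
    -- S is nonempty
    obtain ⟨a, ha, b, hb, hab⟩ := hx
    have hSne : S.Nonempty := ⟨a, ha, b, hb, by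
      show b + x = a
      rw [← hab]
      exact add_comm b (a-b) ▸ sub_add_cancel a b⟩
    have himg : (fun a => (inner ℝ a (e.symm (0, z')) : ℝ)) '' (e.symm '' (S ×ˢ T))
        = (fun b => (inner ℝ b z' : ℝ)) '' T := by
      rw [← image_comp]
      ext r
      constructor
      · rintro ⟨p, ⟨hp1, hp2⟩, rfl⟩
        exact ⟨p.2, hp2, (hip p).symm⟩
      · rintro ⟨b, hb, rfl⟩
        obtain ⟨s, hs⟩ := hSne
        exact ⟨(s, b), ⟨hs, hb⟩, hip (s, b)⟩
    rw [w, w, himg]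
  · rw [if_neg hx]
    -- S is empty
    have hSe : S = ∅ := by
      by_contra hne
      obtain ⟨p, hp, q, hq, hqe⟩ := Set.nonempty_iff_ne_empty.2 hne
      refine hx ⟨p, hp, q, hq, ?_⟩
      have : q + x = p := hqe
      rw [← this]
      exact add_sub_cancel_left q x
    rw [hSe, Set.empty_prod, Set.image_empty]
    simp [w, Real.sSup_empty, Real.sInf_empty]
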